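/- Let Q : ℝ → ℝ be a smooth, rapidly decaying function (Schwartz-class) satisfying c·Q'''' + (c−1)·Q − Q^(p+1)/(p+1) = 0 on ℝ with c real and p a positive integer. Then the Pohozaev identity holds: (3c/2)·∫(Q'')² − ((c−1)/2)·∫Q² = −(1/((p+1)(p+2)))·∫Q^(p+2). -/

import Mathlib

open MeasureTheory SchwartzMap Filter

namespace RosenauAux

lemma schwartz_tg (f : 𝓢(ℝ, ℝ)) : Function.HasTemperateGrowth (⇑f) := by
  refine ⟨f.smooth ⊤, fun n => ⟨0, SchwartzMap.seminorm ℝ 0 n f, fun x => ?_⟩⟩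
  simpa using f.norm_iteratedFDeriv_le_seminorm ℝ n x

noncomputable def mulS (f g : 𝓢(ℝ, ℝ)) : 𝓢(ℝ, ℝ) :=
  SchwartzMap.bilinLeftCLM (ContinuousLinearMap.mul ℝ ℝ) (schwartz_tg g) f

@[simp] lemma mulS_apply (f g : 𝓢(ℝ, ℝ)) (x : ℝ) : mulS f g x = f x * g x := rfl

noncomputable def xmulS (f : 𝓢(ℝ, ℝ)) : 𝓢(ℝ, ℝ) :=
  SchwartzMap.bilinLeftCLM (ContinuousLinearMap.mul ℝ ℝ)
    (ContinuousLinearMap.id ℝ ℝ).hasTemperateGrowth f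

@[simp] lemma xmulS_apply (f : 𝓢(ℝ, ℝ)) (x : ℝ) : xmulS f x = f x * x := rfl

lemma integrable_xmul (f : 𝓢(ℝ, ℝ)) : Integrable (fun x : ℝ => x * f x) :=
  (xmulS f).integrable.congr (Eventually.of_forall fun x => mul_comm (f x) x)

lemma hasDerivAt_schwartz (f : 𝓢(ℝ, ℝ)) (x : ℝ) :
    HasDerivAt f (derivCLM ℝ ℝ f x) x := by
  rw [derivCLM_apply]
  exact (((f.smooth ⊤).differentiable (by simp)) x).hasDerivAt

lemma integral_xmul_deriv (f : 𝓢(ℝ, ℝ)) :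
    ∫ x : ℝ, x * deriv f x = - ∫ x : ℝ, f x := by
  have h := MeasureTheory.integral_mul_deriv_eq_deriv_mul_of_integrable
    (u := fun x : ℝ => x) (u' := fun _ : ℝ => (1 : ℝ))
    (v := ⇑f) (v' := ⇑(derivCLM ℝ ℝ f))
    (fun x _ => hasDerivAt_id x) (fun x _ => hasDerivAt_schwartz f x)
    (integrable_xmul (derivCLM ℝ ℝ f))
    (f.integrable.congr (Eventually.of_forall fun x => (one_mul (f x)).symm))
    (integrable_xmul f)
  simpa [derivCLM_apply] using h

lemma integral_deriv_zero (f : 𝓢(ℝ, ℝ)) : ∫ x : ℝ, deriv f x = 0 := by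
  have h := MeasureTheory.integral_mul_deriv_eq_deriv_mul_of_integrable
    (u := fun _ : ℝ => (1 : ℝ)) (u' := fun _ : ℝ => (0 : ℝ))
    (v := ⇑f) (v' := ⇑(derivCLM ℝ ℝ f))
    (fun x _ => hasDerivAt_const x (1 : ℝ)) (fun x _ => hasDerivAt_schwartz f x)
    ((derivCLM ℝ ℝ f).integrable.congr (Eventually.of_forall fun x => (one_mul _).symm))
    ((integrable_zero _ _ _).congr (Eventually.of_forall fun x => (zero_mul (f x)).symm))
    (f.integrable.congr (Eventually.of_forall fun x => (one_mul (f x)).symm))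
  simpa [derivCLM_apply] using h

lemma deriv_mulS (f g : 𝓢(ℝ, ℝ)) (x : ℝ) :
    deriv (⇑(mulS f g)) x = deriv f x * g x + f x * deriv g x := by
  have h1 : HasDerivAt (⇑(mulS f g))
      (derivCLM ℝ ℝ f x * g x + f x * derivCLM ℝ ℝ g x) x :=
    (hasDerivAt_schwartz f x).mul (hasDerivAt_schwartz g x)
  rw [h1.deriv, derivCLM_apply, derivCLM_apply]

lemma integral_xmul_ibp (f g : 𝓢(ℝ, ℝ)) :
    ∫ x : ℝ, x * (f x * deriv g x)
      = - (∫ x : ℝ, f x * g x) - ∫ x : ℝ, x * (deriv f x * g x) := by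
  have int1 : Integrable (fun x : ℝ => x * (deriv (⇑f) x * g x)) :=
    (integrable_xmul (mulS (derivCLM ℝ ℝ f) g)).congr
      (Eventually.of_forall fun x => by simp [derivCLM_apply])
  have int2 : Integrable (fun x : ℝ => x * (f x * deriv (⇑g) x)) :=
    (integrable_xmul (mulS f (derivCLM ℝ ℝ g))).congr
      (Eventually.of_forall fun x => by simp [derivCLM_apply])
  have hA := integral_xmul_deriv (mulS f g)
  have hfun : (fun x : ℝ => x * deriv (⇑(mulS f g)) x)
      = fun x => x * (deriv f x * g x) + x * (f x * deriv g x) := by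
    funext x; rw [deriv_mulS]; ring
  rw [hfun, integral_add int1 int2] at hA
  have hmg : ∫ x : ℝ, (mulS f g) x = ∫ x : ℝ, f x * g x := by
    simp only [mulS_apply]
  rw [hmg] at hA
  linarith

lemma integral_xmul_self (g : 𝓢(ℝ, ℝ)) :
    ∫ x : ℝ, x * (g x * deriv g x) = -(1/2) * ∫ x : ℝ, g x * g x := by
  have h := integral_xmul_ibp g g
  have hcomm : (fun x : ℝ => x * (deriv (⇑g) x * g x))
      = fun x => x * (g x * deriv g x) := by funext x; ring
  rw [hcomm] at h
  linarith

noncomputable def powS (f : 𝓢(ℝ, ℝ)) : ℕ → 𝓢(ℝ, ℝ)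
  | 0 => f
  | n + 1 => mulS (powS f n) f

@[simp] lemma powS_apply (f : 𝓢(ℝ, ℝ)) (n : ℕ) (x : ℝ) :
    powS f n x = f x ^ (n + 1) := by
  induction n with
  | zero => simp [powS]
  | succ n ih => simp [powS, ih, pow_succ]

end RosenauAux

open RosenauAux

theorem rosenau_pohozaev_identity
    (Q : 𝓢(ℝ, ℝ)) (c : ℝ) (p : ℕ) (hp : 0 < p)
    (hODE : ∀ x : ℝ, c * iteratedDeriv 4 Q x + (c - 1) * Q x
      - (Q x) ^ (p + 1) / ((p : ℝ) + 1) = 0) :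
    (3 * c / 2) * (∫ x : ℝ, (iteratedDeriv 2 Q x) ^ 2)
      - ((c - 1) / 2) * (∫ x : ℝ, (Q x) ^ 2)
      = -(1 / (((p : ℝ) + 1) * ((p : ℝ) + 2))) * ∫ x : ℝ, (Q x) ^ (p + 2) := by
  set Q1 : 𝓢(ℝ, ℝ) := derivCLM ℝ ℝ Q with hQ1
  set Q2 : 𝓢(ℝ, ℝ) := derivCLM ℝ ℝ Q1 with hQ2
  set Q3 : 𝓢(ℝ, ℝ) := derivCLM ℝ ℝ Q2 with hQ3
  set Q4 : 𝓢(ℝ, ℝ) := derivCLM ℝ ℝ Q3 with hQ4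
  have cQ1 : ⇑Q1 = deriv ⇑Q := funext fun x => derivCLM_apply ℝ Q x
  have cQ2 : ⇑Q2 = deriv ⇑Q1 := funext fun x => derivCLM_apply ℝ Q1 x
  have cQ3 : ⇑Q3 = deriv ⇑Q2 := funext fun x => derivCLM_apply ℝ Q2 x
  have cQ4 : ⇑Q4 = deriv ⇑Q3 := funext fun x => derivCLM_apply ℝ Q3 x
  have h2 : iteratedDeriv 2 (⇑Q) = ⇑Q2 := by
    rw [show (2 : ℕ) = 0 + 1 + 1 from rfl, iteratedDeriv_succ, iteratedDeriv_succ,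
      iteratedDeriv_zero, ← cQ1, ← cQ2]
  have h4 : iteratedDeriv 4 (⇑Q) = ⇑Q4 := by
    rw [show (4 : ℕ) = 0 + 1 + 1 + 1 + 1 from rfl, iteratedDeriv_succ, iteratedDeriv_succ,
      iteratedDeriv_succ, iteratedDeriv_succ, iteratedDeriv_zero,
      ← cQ1, ← cQ2, ← cQ3, ← cQ4]
  set IQ : ℝ := ∫ x : ℝ, Q x * Q x with hIQ
  set J : ℝ := ∫ x : ℝ, Q2 x * Q2 x with hJ
  set K : ℝ := ∫ x : ℝ, (Q x) ^ (p + 2) with hK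
  -- e1 : ∫ x (Q Q') = -(1/2) IQ
  have e1 : ∫ x : ℝ, x * (Q x * Q1 x) = -(1/2) * IQ := by
    have := integral_xmul_self Q
    rw [← cQ1] at this
    exact this
  -- e3 : ∫ x (Q1 Q4) = (3/2) J
  have s1 := integral_xmul_ibp Q1 Q3
  rw [← cQ4, ← cQ2] at s1
  have s2 : ∫ x : ℝ, x * (Q2 x * Q3 x) = -(1/2) * J := by
    have := integral_xmul_self Q2
    rw [← cQ3] at this
    exact this
  have s3 : ∫ x : ℝ, Q1 x * Q3 x = - J := by
    have hz := integral_deriv_zero (mulS Q1 Q2)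
    have hfun : (fun x : ℝ => deriv (⇑(mulS Q1 Q2)) x)
        = fun x => Q2 x * Q2 x + Q1 x * Q3 x := by
      funext x; rw [deriv_mulS, ← cQ2, ← cQ3]
    rw [hfun, integral_add ((mulS Q2 Q2).integrable.congr
        (Eventually.of_forall fun x => by simp))
      ((mulS Q1 Q3).integrable.congr (Eventually.of_forall fun x => by simp))] at hz
    rw [← hJ] at hz
    linarith
  have e3 : ∫ x : ℝ, x * (Q1 x * Q4 x) = (3/2) * J := by
    rw [s2, s3] at s1
    linarith
  -- e2 : ∫ x (Q^(p+1) Q1) = -(1/(p+2)) K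
  have e2 : ∫ x : ℝ, x * ((Q x) ^ (p + 1) * Q1 x) = -(1/((p : ℝ) + 2)) * K := by
    set h : 𝓢(ℝ, ℝ) := powS Q (p + 1) with hh
    have hfun : ⇑h = fun y : ℝ => Q y ^ (p + 2) := funext fun y => powS_apply Q (p + 1) y
    have hd : ∀ x : ℝ, deriv (⇑h) x = ((p : ℝ) + 2) * ((Q x) ^ (p + 1) * Q1 x) := by
      intro x
      have hp1 : HasDerivAt (fun y : ℝ => Q y ^ (p + 2))
          (((p : ℝ) + 2) * ((Q x) ^ (p + 1) * Q1 x)) x := by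
        have hpow : HasDerivAt (fun y : ℝ => Q y ^ (p + 2))
            (((p + 2 : ℕ) : ℝ) * Q x ^ (p + 2 - 1) * derivCLM ℝ ℝ Q x) x :=
          (hasDerivAt_schwartz Q x).fun_pow (n := p + 2)
        convert hpow using 1
        have h21 : p + 2 - 1 = p + 1 := rfl
        rw [h21]
        push_cast
        rw [hQ1]
        ring
      have : HasDerivAt (⇑h) (((p : ℝ) + 2) * ((Q x) ^ (p + 1) * Q1 x)) x := by
        rw [hfun]; exact hp1
      exact this.deriv
    have e2' := integral_xmul_deriv h
    have lhs : (fun x : ℝ => x * deriv (⇑h) x)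
        = fun x : ℝ => ((p : ℝ) + 2) * (x * ((Q x) ^ (p + 1) * Q1 x)) := by
      funext x; rw [hd x]; ring
    rw [lhs, integral_const_mul] at e2'
    have rhs : ∫ x : ℝ, h x = K := by
      simp only [hfun, hK]
    rw [rhs] at e2'
    have hne : ((p : ℝ) + 2) ≠ 0 := by positivity
    have : ∫ x : ℝ, x * ((Q x) ^ (p + 1) * Q1 x) = -K / ((p : ℝ) + 2) := by
      rw [eq_div_iff hne]
      linear_combination e2'
    rw [this]; ring
  -- assemble
  have key : (fun x : ℝ => c * (x * (Q1 x * Q4 x)) + (c - 1) * (x * (Q x * Q1 x))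
      - (1/((p : ℝ) + 1)) * (x * ((Q x) ^ (p + 1) * Q1 x))) = fun _ : ℝ => (0 : ℝ) := by
    funext x
    have hO := hODE x
    rw [h4] at hO
    calc c * (x * (Q1 x * Q4 x)) + (c - 1) * (x * (Q x * Q1 x))
        - (1/((p : ℝ) + 1)) * (x * ((Q x) ^ (p + 1) * Q1 x))
        = (x * Q1 x) * (c * Q4 x + (c - 1) * Q x - (Q x) ^ (p + 1) / ((p : ℝ) + 1)) := by
          ring
      _ = 0 := by rw [hO]; ring
  have int_a : Integrable (fun x : ℝ => x * (Q1 x * Q4 x)) :=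
    (integrable_xmul (mulS Q1 Q4)).congr (Eventually.of_forall fun x => by simp)
  have int_b : Integrable (fun x : ℝ => x * (Q x * Q1 x)) :=
    (integrable_xmul (mulS Q Q1)).congr (Eventually.of_forall fun x => by simp)
  have int_c : Integrable (fun x : ℝ => x * ((Q x) ^ (p + 1) * Q1 x)) :=
    (integrable_xmul (mulS (powS Q p) Q1)).congr (Eventually.of_forall fun x => by simp)
  have hzero : ∫ x : ℝ, (c * (x * (Q1 x * Q4 x)) + (c - 1) * (x * (Q x * Q1 x))
      - (1/((p : ℝ) + 1)) * (x * ((Q x) ^ (p + 1) * Q1 x))) = 0 := by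
    rw [key]
    exact integral_zero _ _
  have int_ab : Integrable (fun x : ℝ => c * (x * (Q1 x * Q4 x))
      + (c - 1) * (x * (Q x * Q1 x))) :=
    (int_a.const_mul c).add (int_b.const_mul (c - 1))
  rw [integral_sub int_ab (int_c.const_mul _),
    integral_add (int_a.const_mul c) (int_b.const_mul (c - 1)),
    integral_const_mul, integral_const_mul, integral_const_mul] at hzero
  rw [e1, e2, e3] at hzero
  have g2 : ∫ x : ℝ, (iteratedDeriv 2 (⇑Q) x) ^ 2 = J := by
    rw [h2, hJ]
    simp only [pow_two]
  have g0 : ∫ x : ℝ, (Q x) ^ 2 = IQ := by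
    rw [hIQ]
    simp only [pow_two]
  rw [g2, g0, ← one_div_mul_one_div]
  linear_combination hzero
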